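/- arXiv:1705.08113 — 4 statements merged into one kernel-verified Lean document; each statement's English description precedes it below -/
import Mathlib

section
/- Two permutations σ, τ ∈ S_n (identified with words σ(1)⋯σ(n) and τ(1)⋯τ(n)) are Bell congruent if and only if PSA(σ) = PSA(τ). -/
/-- One Bell rewriting: `x·b·u·c·a·y ↦ x·b·u·a·c·y` where `a < b < c` and all letters
of `u` are smaller than `b`. -/
def BellStep (w w' : List ℕ) : Prop :=
  ∃ (x y u : List ℕ) (a b c : ℕ), a < b ∧ b < c ∧ (∀ z ∈ u, z < b) ∧
    w = x ++ b :: u ++ c :: a :: y ∧ w' = x ++ b :: u ++ a :: c :: y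

/-- The Bell congruence: the equivalence relation generated by Bell rewritings. -/
def BellCongr : List ℕ → List ℕ → Prop := Relation.EqvGen BellStep

/-- One step of the patience sorting algorithm: insert the letter `x` into the block of
`S` whose maximum is largest among those maxima smaller than `x`; if no block has
maximum smaller than `x`, create the new block `{x}`. -/
def PSAinsert (x : ℕ) (S : Finset (Finset ℕ)) : Finset (Finset ℕ) :=
  let cands := S.filter (fun B => B.max < (x : WithBot ℕ))
  if cands.Nonempty then
    let best := (cands.filter (fun B => ∀ C ∈ cands, C.max ≤ B.max)).sup id
    insert (insert x best) (S.erase best)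
  else insert {x} S

/-- The patience sorting algorithm applied to a word with distinct letters: the set
partition of its letters obtained by inserting them from left to right. -/
def PSA (w : List ℕ) : Finset (Finset ℕ) :=
  w.foldl (fun S x => PSAinsert x S) ∅

namespace BellAux

def hd (B : List ℕ) : ℕ := B.headD 0

def ins (z : ℕ) : List (List ℕ) → List (List ℕ)
  | [] => [[z]]
  | B :: L => if hd B < z then (z :: B) :: L else B :: ins z L

def PSL (w : List ℕ) : List (List ℕ) := w.foldl (fun L z => ins z L) []

def Inv (L : List (List ℕ)) : Prop :=
  (∀ B ∈ L, B ≠ [] ∧ B.Pairwise (· > ·)) ∧ (L.map hd).Pairwise (· > ·)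

def F (L : List (List ℕ)) : Finset (Finset ℕ) := (L.map List.toFinset).toFinset

def canon (L : List (List ℕ)) : List ℕ := (L.map List.reverse).flatten

lemma le_hd {B : List ℕ} (hB : B.Pairwise (· > ·)) {m : ℕ} (hm : m ∈ B) : m ≤ hd B := by
  cases B with
  | nil => simp at hm
  | cons b t =>
    rcases List.mem_cons.1 hm with rfl | h
    · simp [hd]
    · exact le_of_lt ((List.pairwise_cons.1 hB).1 m h)

lemma mem_ins_flatten {z : ℕ} {L : List (List ℕ)} {m : ℕ} :
    m ∈ (ins z L).flatten ↔ m = z ∨ m ∈ L.flatten := by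
  induction L with
  | nil => simp [ins]
  | cons B L ih =>
    by_cases h : hd B < z <;> simp [ins, h, ih] <;> tauto

lemma PSL_append (v w : List ℕ) :
    PSL (v ++ w) = w.foldl (fun L z => ins z L) (PSL v) := by
  simp [PSL, List.foldl_append]

lemma PSL_snoc (v : List ℕ) (z : ℕ) : PSL (v ++ [z]) = ins z (PSL v) := by
  simp [PSL_append]

lemma mem_PSL_flatten {w : List ℕ} {m : ℕ} : m ∈ (PSL w).flatten ↔ m ∈ w := by
  induction w using List.reverseRecOn with
  | nil => simp [PSL]
  | append_singleton v z ih =>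
    rw [PSL_snoc, mem_ins_flatten, ih]
    simp [or_comm]

lemma ins_of_none {z : ℕ} {L : List (List ℕ)} (h : ∀ B ∈ L, ¬ hd B < z) :
    ins z L = L ++ [[z]] := by
  induction L with
  | nil => simp [ins]
  | cons B L ih =>
    have : ¬ hd B < z := h B (by simp)
    simp [ins, this, ih (fun B hB => h B (by simp [hB]))]

lemma ins_of_split {z : ℕ} {P Q : List (List ℕ)} {B0 : List ℕ}
    (hP : ∀ B ∈ P, ¬ hd B < z) (hB0 : hd B0 < z) :
    ins z (P ++ B0 :: Q) = P ++ (z :: B0) :: Q := by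
  induction P with
  | nil => simp [ins, hB0]
  | cons B P ih =>
    have : ¬ hd B < z := hP B (by simp)
    simp [ins, this, ih (fun B hB => hP B (by simp [hB]))]

lemma ins_cases (z : ℕ) (L : List (List ℕ)) :
    (∀ B ∈ L, ¬ hd B < z) ∨
    ∃ P B0 Q, L = P ++ B0 :: Q ∧ (∀ B ∈ P, ¬ hd B < z) ∧ hd B0 < z := by
  induction L with
  | nil => left; simp
  | cons B L ih =>
    by_cases h : hd B < z
    · right; exact ⟨[], B, L, by simp, by simp, h⟩
    · rcases ih with h' | ⟨P, B0, Q, rfl, hP, hB0⟩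
      · left; intro C hC; rcases List.mem_cons.1 hC with rfl | hC
        · exact h
        · exact h' C hC
      · right; refine ⟨B :: P, B0, Q, by simp, ?_, hB0⟩
        intro C hC; rcases List.mem_cons.1 hC with rfl | hC
        · exact h
        · exact hP C hC

end BellAux

namespace BellAux

lemma hd_mem {B : List ℕ} (hB : B ≠ []) : hd B ∈ B := by
  cases B with
  | nil => simp at hB
  | cons b t => simp [hd]

lemma Inv_ins {z : ℕ} {L : List (List ℕ)} (h : Inv L)
    (hz : ∀ m ∈ L.flatten, m ≠ z) : Inv (ins z L) := by
  induction L with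
  | nil =>
    constructor
    · intro B hB; simp [ins] at hB; subst hB; simp
    · simp [ins]
  | cons B L ih =>
    obtain ⟨h1, h2⟩ := h
    obtain ⟨hBne, hBp⟩ := h1 B (by simp)
    rw [List.map_cons, List.pairwise_cons] at h2
    by_cases hc : hd B < z
    · constructor
      · intro C hC
        rw [ins] at hC; simp only [if_pos hc] at hC
        rcases List.mem_cons.1 hC with rfl | hC
        · refine ⟨by simp, ?_⟩
          rw [List.pairwise_cons]
          exact ⟨fun m hm => lt_of_le_of_lt (le_hd hBp hm) hc, hBp⟩
        · exact h1 C (by simp [hC])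
      · rw [ins]; simp only [if_pos hc]
        rw [List.map_cons, List.pairwise_cons]
        refine ⟨?_, h2.2⟩
        intro h' hh'
        have : h' < hd B := h2.1 h' hh'
        simp [hd]; omega
    · have hzB : z < hd B := by
        have : hd B ≠ z := hz (hd B) (by simp; exact Or.inl (hd_mem hBne))
        omega
      have ihInv : Inv (ins z L) := by
        refine ih ⟨fun C hC => h1 C (by simp [hC]), h2.2⟩ ?_
        intro m hm; exact hz m (by simp [hm])
      constructor
      · intro C hC
        rw [ins] at hC; simp only [if_neg hc] at hC
        rcases List.mem_cons.1 hC with rfl | hC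
        · exact ⟨hBne, hBp⟩
        · exact ihInv.1 C hC
      · rw [ins]; simp only [if_neg hc]
        rw [List.map_cons, List.pairwise_cons]
        refine ⟨?_, ihInv.2⟩
        intro h' hh'
        simp only [List.mem_map] at hh'
        obtain ⟨C, hC, rfl⟩ := hh'
        -- C ∈ ins z L, so hd C = z or C ∈ L ... need heads of ins z L
        rcases ins_cases z L with hnone | ⟨P, B0, Q, hSplit, hP, hB0⟩
        · rw [ins_of_none hnone] at hC
          rcases List.mem_append.1 hC with hC | hC
          · exact h2.1 (hd C) (List.mem_map_of_mem (f := hd) hC)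
          · simp at hC; subst hC; simpa [hd] using hzB
        · rw [hSplit, ins_of_split hP hB0] at hC
          rcases List.mem_append.1 hC with hC | hC
          · exact h2.1 (hd C) (by rw [hSplit]; exact List.mem_map_of_mem (f := hd) (by simp [hC]))
          · rcases List.mem_cons.1 hC with rfl | hC
            · simpa [hd] using hzB
            · exact h2.1 (hd C) (by rw [hSplit]; exact List.mem_map_of_mem (f := hd) (by simp [hC]))

lemma Inv_PSL {w : List ℕ} (hw : w.Nodup) : Inv (PSL w) := by
  induction w using List.reverseRecOn with
  | nil => exact ⟨by simp [PSL], by simp [PSL]⟩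
  | append_singleton v z ih =>
    rw [PSL_snoc]
    have hv : v.Nodup := (List.nodup_append.1 hw).1
    refine Inv_ins (ih hv) ?_
    intro m hm
    rw [mem_PSL_flatten] at hm
    intro hmz
    have := List.nodup_append.1 hw
    exact this.2.2 m hm z (by simp) hmz

lemma hd_mem_ins_self (z : ℕ) (L : List (List ℕ)) : z ∈ (ins z L).map hd := by
  induction L with
  | nil => simp [ins, hd]
  | cons B L ih =>
    by_cases hc : hd B < z
    · rw [ins]; simp only [if_pos hc, List.map_cons, List.mem_cons]
      exact Or.inl rfl
    · rw [ins]; simp only [if_neg hc]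
      simpa using Or.inr (by simpa using ih)

lemma hd_preserved {b z : ℕ} {L : List (List ℕ)} (hb : b ∈ L.map hd) (hzb : z < b) :
    b ∈ (ins z L).map hd := by
  induction L with
  | nil => simp at hb
  | cons B L ih =>
    simp only [List.map_cons, List.mem_cons] at hb
    by_cases hc : hd B < z
    · rw [ins]; simp only [if_pos hc]
      rcases hb with rfl | hb
      · omega
      · simp [hb]
    · rw [ins]; simp only [if_neg hc]
      rcases hb with rfl | hb
      · simp
      · simp only [List.map_cons, List.mem_cons]
        exact Or.inr (ih hb)

lemma b_in_heads (b : ℕ) : ∀ (u v : List ℕ), (∀ z ∈ u, z < b) →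
    b ∈ (PSL (v ++ b :: u)).map hd := by
  intro u
  induction u using List.reverseRecOn with
  | nil =>
    intro v _
    have : v ++ [b] = v ++ b :: [] := rfl
    rw [show v ++ b :: ([] : List ℕ) = v ++ [b] from rfl, PSL_snoc]
    exact hd_mem_ins_self b (PSL v)
  | append_singleton u z ih =>
    intro v hu
    have : v ++ b :: (u ++ [z]) = (v ++ b :: u) ++ [z] := by simp
    rw [this, PSL_snoc]
    exact hd_preserved (ih v (fun m hm => hu m (by simp [hm]))) (hu z (by simp))

lemma hd_le_first {L : List (List ℕ)} {B : List ℕ} (h2 : (L.map hd).Pairwise (· > ·))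
    {C : List ℕ} (hC : C ∈ L) (hB : L.head? = some B) : hd C ≤ hd B := by
  cases L with
  | nil => simp at hC
  | cons B' L =>
    simp at hB; subst hB
    rcases List.mem_cons.1 hC with rfl | hC
    · exact le_refl _
    · rw [List.map_cons, List.pairwise_cons] at h2
      exact le_of_lt (h2.1 (hd C) (List.mem_map_of_mem (f := hd) hC))

lemma ins_comm {a b c : ℕ} (hab : a < b) (hbc : b < c) :
    ∀ (S : List (List ℕ)), Inv S → b ∈ S.map hd →
    ins a (ins c S) = ins c (ins a S) := by
  intro S
  induction S with
  | nil => simp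
  | cons B T ih =>
    intro hInv hb
    have h2 := hInv.2
    rw [List.map_cons, List.pairwise_cons] at h2
    have hBa : ¬ hd B < a := by
      have : b ≤ hd B := by
        simp only [List.map_cons, List.mem_cons] at hb
        rcases hb with rfl | hb
        · exact le_refl _
        · exact le_of_lt (h2.1 b hb)
      omega
    by_cases hBc : hd B < c
    · have e1 : ins c (B :: T) = (c :: B) :: T := by rw [ins]; simp only [if_pos hBc]
      have e2 : ins a (B :: T) = B :: ins a T := by rw [ins]; simp only [if_neg hBa]
      have hca : ¬ hd (c :: B) < a := by
        simp only [hd, List.headD_cons]; omega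
      have e3 : ins a ((c :: B) :: T) = (c :: B) :: ins a T := by
        rw [ins]; simp only [if_neg hca]
      have e4 : ins c (B :: ins a T) = (c :: B) :: ins a T := by
        rw [ins]; simp only [if_pos hBc]
      rw [e1, e2, e3, e4]
    · have e1 : ins c (B :: T) = B :: ins c T := by rw [ins]; simp only [if_neg hBc]
      have e2 : ins a (B :: T) = B :: ins a T := by rw [ins]; simp only [if_neg hBa]
      have e3 : ins a (B :: ins c T) = B :: ins a (ins c T) := by
        rw [ins]; simp only [if_neg hBa]
      have e4 : ins c (B :: ins a T) = B :: ins c (ins a T) := by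
        rw [ins]; simp only [if_neg hBc]
      rw [e1, e2, e3, e4]
      congr 1
      have hbT : b ∈ T.map hd := by
        simp only [List.map_cons, List.mem_cons] at hb
        rcases hb with rfl | hb
        · omega
        · exact hb
      have hInvT : Inv T := ⟨fun C hC => hInv.1 C (by simp [hC]), h2.2⟩
      exact ih hInvT hbT

end BellAux

namespace BellAux

lemma bellStep_perm {w w' : List ℕ} (h : BellStep w w') : w.Perm w' := by
  obtain ⟨x, y, u, a, b, c, _, _, _, rfl, rfl⟩ := h
  exact List.Perm.append_left _ (List.Perm.swap a c y)

lemma bellCongr_perm {w w' : List ℕ} (h : BellCongr w w') : w.Perm w' := by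
  induction h with
  | rel _ _ h => exact bellStep_perm h
  | refl _ => exact List.Perm.refl _
  | symm _ _ _ ih => exact ih.symm
  | trans _ _ _ _ _ ih1 ih2 => exact ih1.trans ih2

lemma bellStep_append {v v' s : List ℕ} (h : BellStep v v') :
    BellStep (v ++ s) (v' ++ s) := by
  obtain ⟨x, y, u, a, b, c, h1, h2, h3, rfl, rfl⟩ := h
  exact ⟨x, y ++ s, u, a, b, c, h1, h2, h3, by simp, by simp⟩

lemma bellCongr_append {v v' : List ℕ} (s : List ℕ) (h : BellCongr v v') :
    BellCongr (v ++ s) (v' ++ s) := by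
  induction h with
  | rel _ _ h => exact Relation.EqvGen.rel _ _ (bellStep_append h)
  | refl _ => exact Relation.EqvGen.refl _
  | symm _ _ _ ih => exact Relation.EqvGen.symm _ _ ih
  | trans _ _ _ _ _ ih1 ih2 => exact Relation.EqvGen.trans _ _ _ ih1 ih2

lemma move_left {b z : ℕ} (hbz : b < z) (x : List ℕ) :
    ∀ t : List ℕ, (∀ m ∈ t, m < b) →
    BellCongr (x ++ b :: (t ++ [z])) (x ++ b :: z :: t) := by
  intro t
  induction t using List.reverseRecOn with
  | nil => intro _; exact Relation.EqvGen.refl _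
  | append_singleton t m ih =>
    intro ht
    have hm : m < b := ht m (by simp)
    have step : BellStep (x ++ b :: (t ++ z :: m :: [])) (x ++ b :: (t ++ m :: z :: [])) :=
      ⟨x, [], t, m, b, z, hm, hbz, fun q hq => ht q (by simp [hq]), by simp, by simp⟩
    have h1 : BellCongr (x ++ b :: (t ++ [m, z])) (x ++ b :: (t ++ [z, m])) :=
      Relation.EqvGen.symm _ _ (Relation.EqvGen.rel _ _ step)
    have h2 := bellCongr_append [m] (ih (fun q hq => ht q (by simp [hq])))
    have e1 : x ++ b :: (t ++ [m]) ++ [z] = x ++ b :: (t ++ [m, z]) := by simp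
    have e2 : (x ++ b :: (t ++ [z])) ++ [m] = x ++ b :: (t ++ [z, m]) := by simp
    have e3 : (x ++ b :: z :: t) ++ [m] = x ++ b :: z :: (t ++ [m]) := by simp
    rw [e2, e3] at h2
    have e4 : x ++ b :: ((t ++ [m]) ++ [z]) = x ++ b :: (t ++ [m, z]) := by simp
    rw [e4]
    exact Relation.EqvGen.trans _ _ _ h1 h2

lemma canon_append (P Q : List (List ℕ)) : canon (P ++ Q) = canon P ++ canon Q := by
  simp [canon]

lemma canon_ins {z : ℕ} {L : List (List ℕ)} (hInv : Inv L) :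
    BellCongr (canon L ++ [z]) (canon (ins z L)) := by
  rcases ins_cases z L with hnone | ⟨P, B0, Q, rfl, hP, hB0⟩
  · rw [ins_of_none hnone]
    have : canon (L ++ [[z]]) = canon L ++ [z] := by simp [canon]
    rw [this]
    exact Relation.EqvGen.refl _
  · rw [ins_of_split hP hB0]
    obtain ⟨hne, hpw⟩ := hInv.1 B0 (by simp)
    obtain ⟨b, B0t, rfl⟩ : ∃ b t, B0 = b :: t := by
      cases B0 with
      | nil => simp at hne
      | cons b t => exact ⟨b, t, rfl⟩
    have hbz : b < z := by simpa [hd] using hB0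
    have hQheads : ∀ C ∈ Q, hd C < b := by
      have hsub : (((b :: B0t) :: Q).map hd).Pairwise (· > ·) :=
        List.Pairwise.sublist
          ((List.sublist_append_right P ((b :: B0t) :: Q)).map hd) hInv.2
      rw [List.map_cons, List.pairwise_cons] at hsub
      intro C hC
      have h' := hsub.1 (hd C) (List.mem_map_of_mem (f := hd) hC)
      simpa [hd] using h'
    have hmQ : ∀ m ∈ canon Q, m < b := by
      intro m hm
      simp only [canon, List.mem_flatten, List.mem_map] at hm
      obtain ⟨l, ⟨C, hC, rfl⟩, hml⟩ := hm
      have hmC : m ∈ C := by simpa using hml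
      exact lt_of_le_of_lt (le_hd (hInv.1 C (by simp [hC])).2 hmC) (hQheads C hC)
    have key := move_left hbz (canon P ++ B0t.reverse) (canon Q) hmQ
    have e1 : canon (P ++ (b :: B0t) :: Q) ++ [z]
        = (canon P ++ B0t.reverse) ++ b :: (canon Q ++ [z]) := by
      simp [canon]
    have e2 : canon (P ++ (z :: b :: B0t) :: Q)
        = (canon P ++ B0t.reverse) ++ b :: z :: canon Q := by
      simp [canon]
    rw [e1, e2]
    exact key

lemma congr_canon {w : List ℕ} (hw : w.Nodup) : BellCongr w (canon (PSL w)) := by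
  induction w using List.reverseRecOn with
  | nil => exact Relation.EqvGen.refl _
  | append_singleton v z ih =>
    have hv : v.Nodup := (List.nodup_append.1 hw).1
    have h1 := bellCongr_append [z] (ih hv)
    have h2 := canon_ins (z := z) (Inv_PSL hv)
    rw [PSL_snoc]
    exact Relation.EqvGen.trans _ _ _ h1 h2

lemma PSL_eq_of_step {w w' : List ℕ} (h : BellStep w w') (hw : w.Nodup) :
    PSL w = PSL w' := by
  obtain ⟨x, y, u, a, b, c, hab, hbc, hu, rfl, rfl⟩ := h
  have hn : (x ++ b :: u).Nodup := by
    have hs : (x ++ b :: u).Sublist (x ++ b :: u ++ c :: a :: y) := by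
      simpa using List.sublist_append_left (x ++ b :: u) (c :: a :: y)
    exact hs.nodup hw
  have hcomm : ins a (ins c (PSL (x ++ b :: u))) = ins c (ins a (PSL (x ++ b :: u))) :=
    ins_comm hab hbc _ (Inv_PSL hn) (b_in_heads b u x hu)
  have e1 := PSL_append (x ++ b :: u) (c :: a :: y)
  have e2 := PSL_append (x ++ b :: u) (a :: c :: y)
  rw [e1, e2]
  simp only [List.foldl_cons]
  rw [hcomm]

end BellAux

namespace BellAux

lemma max_toFinset {B : List ℕ} (hne : B ≠ []) (hpw : B.Pairwise (· > ·)) :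
    B.toFinset.max = (hd B : WithBot ℕ) := by
  cases B with
  | nil => simp at hne
  | cons b t =>
    simp only [List.toFinset_cons, Finset.max_insert]
    have ht : t.toFinset.max ≤ (b : WithBot ℕ) := by
      apply Finset.max_le
      intro m hm
      rw [List.mem_toFinset] at hm
      have hmb := le_of_lt ((List.pairwise_cons.1 hpw).1 m hm)
      exact WithBot.coe_le_coe.2 hmb
    simp only [hd, List.headD_cons]
    exact sup_eq_left.2 ht

lemma F_cons_middle (P Q : List (List ℕ)) (X : List ℕ) :
    F (P ++ X :: Q) = insert X.toFinset (F (P ++ Q)) := by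
  ext A
  simp [F]
  try tauto

lemma bridge {z : ℕ} {L : List (List ℕ)} (hInv : Inv L) :
    PSAinsert z (F L) = F (ins z L) := by
  have hmax : ∀ C ∈ L, C.toFinset.max = (hd C : WithBot ℕ) := fun C hC =>
    max_toFinset (hInv.1 C hC).1 (hInv.1 C hC).2
  rcases ins_cases z L with hnone | ⟨P, B0, Q, rfl, hP, hB0⟩
  · rw [ins_of_none hnone]
    have hcands : (F L).filter (fun B => B.max < (z : WithBot ℕ)) = ∅ := by
      rw [Finset.filter_eq_empty_iff]
      intro Bf hBf
      simp only [F, List.mem_toFinset, List.mem_map] at hBf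
      obtain ⟨C, hC, rfl⟩ := hBf
      rw [hmax C hC]
      exact fun hlt => (hnone C hC) (by exact_mod_cast hlt)
    rw [PSAinsert]
    simp only [hcands, Finset.not_nonempty_empty, if_false]
    have hF : F (L ++ [[z]]) = insert (List.toFinset [z]) (F (L ++ [])) :=
      F_cons_middle L [] [z]
    rw [List.append_nil] at hF
    rw [hF]
    try simp
  · -- heads: everything in P is ≥ z (i.e. > since ¬ <), B0's head < z, Q's heads < hd B0
    have hpw2 := hInv.2
    rw [List.map_append, List.pairwise_append] at hpw2
    have hQlt : ∀ C ∈ Q, hd C < hd B0 := by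
      intro C hC
      have := hpw2.2.1
      rw [List.map_cons, List.pairwise_cons] at this
      exact this.1 (hd C) (List.mem_map_of_mem (f := hd) hC)
    have hPgt : ∀ C ∈ P, hd B0 < hd C := by
      intro C hC
      exact hpw2.2.2 (hd C) (List.mem_map_of_mem (f := hd) hC) (hd B0) (by simp)
    set S := F (P ++ B0 :: Q) with hS
    have hcands : S.filter (fun B => B.max < (z : WithBot ℕ))
        = ((B0 :: Q).map List.toFinset).toFinset := by
      ext A
      simp only [Finset.mem_filter, hS, F, List.mem_toFinset, List.mem_map]
      constructor
      · rintro ⟨⟨C, hC, rfl⟩, hlt⟩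
        rcases List.mem_append.1 hC with hC | hC
        · exfalso
          rw [hmax C (by simp [hC])] at hlt
          have : hd C < z := by exact_mod_cast hlt
          exact hP C hC this
        · exact ⟨C, hC, rfl⟩
      · rintro ⟨C, hC, rfl⟩
        have hCL : C ∈ P ++ B0 :: Q := List.mem_append.2 (Or.inr hC)
        refine ⟨⟨C, hCL, rfl⟩, ?_⟩
        rw [hmax C hCL]
        have : hd C < z := by
          rcases List.mem_cons.1 hC with rfl | hC
          · exact hB0
          · exact lt_trans (hQlt C hC) hB0
        exact_mod_cast this
    have hne : (S.filter (fun B => B.max < (z : WithBot ℕ))).Nonempty := by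
      rw [hcands]
      exact ⟨B0.toFinset, by simp⟩
    have hbest : ((S.filter (fun B => B.max < (z : WithBot ℕ))).filter
        (fun B => ∀ C ∈ S.filter (fun B => B.max < (z : WithBot ℕ)), C.max ≤ B.max)).sup id
        = B0.toFinset := by
      have hfeq : (S.filter (fun B => B.max < (z : WithBot ℕ))).filter
          (fun B => ∀ C ∈ S.filter (fun B => B.max < (z : WithBot ℕ)), C.max ≤ B.max)
          = {B0.toFinset} := by
        rw [hcands]
        ext A
        simp only [Finset.mem_filter, Finset.mem_singleton, List.mem_toFinset, List.mem_map]
        constructor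
        · rintro ⟨⟨C, hC, rfl⟩, hall⟩
          rcases List.mem_cons.1 hC with rfl | hC
          · rfl
          · exfalso
            have hB0L : B0 ∈ P ++ B0 :: Q := by simp
            have hCL : C ∈ P ++ B0 :: Q := by simp [hC]
            have := hall B0.toFinset ⟨B0, by simp, rfl⟩
            rw [hmax B0 hB0L, hmax C hCL] at this
            have : hd B0 ≤ hd C := by exact_mod_cast this
            exact absurd (hQlt C hC) (by omega)
        · rintro rfl
          refine ⟨⟨B0, by simp, rfl⟩, ?_⟩
          rintro Cf ⟨C, hC, rfl⟩
          have hB0L : B0 ∈ P ++ B0 :: Q := by simp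
          have hCL : C ∈ P ++ B0 :: Q := by simp [hC]
          rw [hmax B0 hB0L, hmax C hCL]
          rcases List.mem_cons.1 hC with rfl | hC
          · exact le_refl _
          · exact_mod_cast le_of_lt (hQlt C hC)
      rw [hfeq, Finset.sup_singleton, id]
    have herase : S.erase B0.toFinset = F (P ++ Q) := by
      have hdiff : ∀ C ∈ P ++ Q, C.toFinset ≠ B0.toFinset := by
        intro C hC heq
        have hCL : C ∈ P ++ B0 :: Q := by
          rcases List.mem_append.1 hC with h | h
          · simp [h]
          · simp [h]
        have hB0L : B0 ∈ P ++ B0 :: Q := by simp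
        have := congrArg Finset.max heq
        rw [hmax C hCL, hmax B0 hB0L] at this
        have hhd : hd C = hd B0 := by exact_mod_cast this
        rcases List.mem_append.1 hC with h | h
        · exact absurd (hPgt C h) (by omega)
        · exact absurd (hQlt C h) (by omega)
      ext A
      simp only [Finset.mem_erase, hS, F, List.mem_toFinset, List.mem_map]
      constructor
      · rintro ⟨hA, C, hC, rfl⟩
        rcases List.mem_append.1 hC with h | h
        · exact ⟨C, List.mem_append.2 (Or.inl h), rfl⟩
        · rcases List.mem_cons.1 h with rfl | h
          · exact absurd rfl hA
          · exact ⟨C, List.mem_append.2 (Or.inr h), rfl⟩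
      · rintro ⟨C, hC, rfl⟩
        refine ⟨hdiff C hC, C, ?_, rfl⟩
        rcases List.mem_append.1 hC with h | h
        · simp [h]
        · simp [h]
    rw [ins_of_split hP hB0, PSAinsert]
    simp only [hne, if_true, hbest, herase]
    rw [F_cons_middle P Q (z :: B0)]
    simp

lemma PSA_snoc (v : List ℕ) (z : ℕ) : PSA (v ++ [z]) = PSAinsert z (PSA v) := by
  simp [PSA, List.foldl_append]

lemma PSA_eq_F {w : List ℕ} (hw : w.Nodup) : PSA w = F (PSL w) := by
  induction w using List.reverseRecOn with
  | nil => rfl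
  | append_singleton v z ih =>
    have hv : v.Nodup := (List.nodup_append.1 hw).1
    rw [PSA_snoc, PSL_snoc, ih hv, bridge (Inv_PSL hv)]

end BellAux

namespace BellAux

lemma block_nodup {B : List ℕ} (hpw : B.Pairwise (· > ·)) : B.Nodup :=
  hpw.imp (fun h => Nat.ne_of_gt h)

lemma block_eq_of_toFinset {B B' : List ℕ}
    (h : B.Pairwise (· > ·)) (h' : B'.Pairwise (· > ·))
    (he : B.toFinset = B'.toFinset) : B = B' := by
  haveI : IsAntisymm ℕ (· > ·) := ⟨fun a b h1 h2 => absurd h1 (by omega)⟩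
  exact List.Perm.eq_of_pairwise' h h'
    (List.perm_of_nodup_nodup_toFinset_eq (block_nodup h) (block_nodup h') he)

lemma F_inj : ∀ L L' : List (List ℕ), Inv L → Inv L' → F L = F L' → L = L' := by
  have hmapeq : ∀ L L' : List (List ℕ), Inv L → Inv L' →
      L.map List.toFinset = L'.map List.toFinset → L = L' := by
    intro L
    induction L with
    | nil => intro L' _ _ h; cases L' <;> simp_all
    | cons B T ih =>
      intro L' hInv hInv' h
      cases L' with
      | nil => simp_all
      | cons B' T' =>
        simp only [List.map_cons, List.cons.injEq] at h
        have hB : B = B' :=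
          block_eq_of_toFinset (hInv.1 B (by simp)).2 (hInv'.1 B' (by simp)).2 h.1
        have hT : T = T' := by
          refine ih T' ⟨fun C hC => hInv.1 C (by simp [hC]),
            (List.pairwise_cons.1 (by simpa using hInv.2)).2⟩
            ⟨fun C hC => hInv'.1 C (by simp [hC]),
            (List.pairwise_cons.1 (by simpa using hInv'.2)).2⟩ h.2
        rw [hB, hT]
  intro L L' hInv hInv' hF
  apply hmapeq L L' hInv hInv'
  -- the mapped lists are nodup, sorted by descending max, and have equal toFinsets
  set r : Finset ℕ → Finset ℕ → Prop := fun A B => B.max < A.max with hr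
  haveI : IsAntisymm (Finset ℕ) r := ⟨fun a b h1 h2 => absurd (h1.trans h2) (lt_irrefl _)⟩
  have hsorted : ∀ M : List (List ℕ), Inv M → (M.map List.toFinset).Pairwise r := by
    intro M hM
    rw [List.pairwise_map]
    have := hM.2
    rw [List.pairwise_map] at this
    refine this.imp_of_mem ?_
    intro C D hC hD hgt
    show D.toFinset.max < C.toFinset.max
    rw [max_toFinset (hM.1 C hC).1 (hM.1 C hC).2, max_toFinset (hM.1 D hD).1 (hM.1 D hD).2]
    exact_mod_cast hgt
  have hnd : ∀ M : List (List ℕ), Inv M → (M.map List.toFinset).Nodup := by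
    intro M hM
    refine (hsorted M hM).imp ?_
    intro A B hAB
    intro hEq
    rw [hEq] at hAB
    exact absurd hAB (lt_irrefl _)
  exact List.Perm.eq_of_pairwise' (hsorted L hInv) (hsorted L' hInv')
    (List.perm_of_nodup_nodup_toFinset_eq (hnd L hInv) (hnd L' hInv') hF)

lemma PSA_eq_of_step {w w' : List ℕ} (h : BellStep w w') (hw : w.Nodup) :
    PSA w = PSA w' := by
  have hw' : w'.Nodup := (bellStep_perm h).nodup_iff.1 hw
  rw [PSA_eq_F hw, PSA_eq_F hw', PSL_eq_of_step h hw]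

end BellAux


open BellAux

/-- Two permutations of `{1,…,n}` (written as words) are Bell congruent if and only if
they have the same image under the patience sorting algorithm. -/
theorem bellCongr_iff_PSA_eq (n : ℕ) (σ τ : List ℕ)
    (hσ : σ.Perm ((List.range n).map (· + 1)))
    (hτ : τ.Perm ((List.range n).map (· + 1))) :
    BellCongr σ τ ↔ PSA σ = PSA τ := by
  have hnr : ((List.range n).map (· + 1)).Nodup :=
    List.Nodup.map (fun a b hab => by omega) (List.nodup_range (n := n))
  have hσn : σ.Nodup := hσ.nodup_iff.2 hnr
  have hτn : τ.Nodup := hτ.nodup_iff.2 hnr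
  constructor
  · intro h
    have main : ∀ v w : List ℕ, BellCongr v w → (v.Nodup → PSA v = PSA w) := by
      intro v w h
      induction h with
      | rel a b hab => exact fun ha => PSA_eq_of_step hab ha
      | refl a => exact fun _ => rfl
      | symm a b hab ih =>
        intro hb
        have ha : a.Nodup := (bellCongr_perm hab).nodup_iff.2 hb
        exact (ih ha).symm
      | trans a b c hab hbc ih1 ih2 =>
        intro ha
        have hb : b.Nodup := (bellCongr_perm hab).nodup_iff.1 ha
        exact (ih1 ha).trans (ih2 hb)
    exact main σ τ h hσn
  · intro h
    have h1 := congr_canon hσn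
    have h2 := congr_canon hτn
    have hPSL : PSL σ = PSL τ := by
      apply F_inj _ _ (Inv_PSL hσn) (Inv_PSL hτn)
      rw [← PSA_eq_F hσn, ← PSA_eq_F hτn]
      exact h
    rw [hPSL] at h1
    exact Relation.EqvGen.trans _ _ _ h1 (Relation.EqvGen.symm _ _ h2)
end

section
/- Every Bell congruence class of permutations of S_n has a greatest element for the right weak order; this greatest element avoids the dashed pattern 21-3, and the map sending a class to its greatest element is a bijection from the set of Bell congruence classes of S_n onto the set of permutations of S_n avoiding the dashed pattern 21-3. -/
/-- A covering step of the right weak order: exchange two adjacent letters `a < b`,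
from `…ab…` to `…ba…`. -/
def WeakStep (σ τ : List ℕ) : Prop :=
  ∃ (x y : List ℕ) (a b : ℕ), a < b ∧ σ = x ++ a :: b :: y ∧ τ = x ++ b :: a :: y

/-- The right weak order on permutations written as words. -/
def WeakLE : List ℕ → List ℕ → Prop := Relation.ReflTransGen WeakStep

/-- `w` avoids the dashed pattern `21-3`: there are no positions `p, q` with
`q ≥ p + 2` and `w_{p+1} < w_p < w_q` (0-based positions). -/
def Avoids21dash3 (w : List ℕ) : Prop :=
  ¬ ∃ p q, p + 2 ≤ q ∧ q < w.length ∧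
      w.getD (p + 1) 0 < w.getD p 0 ∧ w.getD p 0 < w.getD q 0

/-- insertion producing the canonical (greatest) representative -/
def ins : List ℕ → ℕ → List ℕ
  | [], z => [z]
  | h :: t, z => if (∀ x ∈ t, x < h) ∧ h < z then h :: z :: t else h :: ins t z

def nf (w : List ℕ) : List ℕ := w.foldl ins []

lemma ins_perm (v : List ℕ) (z : ℕ) : (ins v z).Perm (z :: v) := by
  induction v with
  | nil => simp [ins]
  | cons h t ih =>
    simp only [ins]
    split_ifs with hc
    · exact List.Perm.swap z h t
    · exact (ih.cons h).trans (List.Perm.swap z h t)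

lemma mem_ins {x : ℕ} {v : List ℕ} {z : ℕ} : x ∈ ins v z ↔ x = z ∨ x ∈ v := by
  rw [(ins_perm v z).mem_iff]; simp

lemma foldl_ins_perm : ∀ (w v : List ℕ), (List.foldl ins v w).Perm (v ++ w) := by
  intro w
  induction w with
  | nil => simp
  | cons z w ih =>
    intro v
    simp only [List.foldl_cons]
    refine (ih (ins v z)).trans ?_
    refine (((ins_perm v z).append_right w).trans ?_)
    exact List.perm_middle.symm

lemma nf_perm (w : List ℕ) : (nf w).Perm w := by
  simpa [nf] using foldl_ins_perm w []

/-- reversed Bell step: a raising step. -/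
def RStep (w w' : List ℕ) : Prop := BellStep w' w

lemma BellStep.cons {s t : List ℕ} (r : ℕ) (h : BellStep s t) : BellStep (r :: s) (r :: t) := by
  obtain ⟨x, y, u, a, b, c, h1, h2, h3, h4, h5⟩ := h
  exact ⟨r :: x, y, u, a, b, c, h1, h2, h3, by simp [h4], by simp [h5]⟩

lemma BellStep.append_right {s t : List ℕ} (r : List ℕ) (h : BellStep s t) :
    BellStep (s ++ r) (t ++ r) := by
  obtain ⟨x, y, u, a, b, c, h1, h2, h3, h4, h5⟩ := h
  exact ⟨x, y ++ r, u, a, b, c, h1, h2, h3, by simp [h4], by simp [h5]⟩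

lemma RStep.cons {s t : List ℕ} (r : ℕ) (h : RStep s t) : RStep (r :: s) (r :: t) :=
  BellStep.cons r h

lemma rtg_cons {s t : List ℕ} (r : ℕ) (h : Relation.ReflTransGen RStep s t) :
    Relation.ReflTransGen RStep (r :: s) (r :: t) :=
  Relation.ReflTransGen.lift (r :: ·) (fun _ _ => RStep.cons r) _ _ h

lemma rtg_append_right {s t : List ℕ} (r : List ℕ) (h : Relation.ReflTransGen RStep s t) :
    Relation.ReflTransGen RStep (s ++ r) (t ++ r) :=
  Relation.ReflTransGen.lift (r := RStep) (p := RStep) (· ++ r) (fun _ _ hh => BellStep.append_right r hh) _ _ h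

/-- move `z` leftwards past `t`, guarded by `h`. -/
lemma move (h z : ℕ) (hz : h < z) :
    ∀ (t y : List ℕ), (∀ x ∈ t, x < h) →
      Relation.ReflTransGen RStep (h :: (t ++ z :: y)) (h :: z :: (t ++ y)) := by
  intro t
  induction t using List.reverseRecOn with
  | nil => intro y _; simp only [List.nil_append]; exact .refl
  | append_singleton t' p ih =>
    intro y hlt
    have hp : p < h := hlt p (by simp)
    have ht' : ∀ x ∈ t', x < h := fun x hx => hlt x (by simp [hx])
    have step1 : RStep (h :: (t' ++ [p] ++ z :: y)) (h :: (t' ++ z :: p :: y)) := by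
      refine ⟨[], y, t', p, h, z, hp, hz, ht', ?_, ?_⟩ <;> simp
    refine Relation.ReflTransGen.head step1 ?_
    have := ih (p :: y) ht'
    simpa using this

lemma raise_ins (v : List ℕ) (z : ℕ) :
    Relation.ReflTransGen RStep (v ++ [z]) (ins v z) := by
  induction v with
  | nil => simp only [ins, List.nil_append]; exact .refl
  | cons h t ih =>
    simp only [ins]
    split_ifs with hc
    · have := move h z hc.2 t [] hc.1
      simpa using this
    · simpa using rtg_cons h ih

lemma raise_nf (w : List ℕ) : Relation.ReflTransGen RStep w (nf w) := by
  induction w using List.reverseRecOn with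
  | nil => exact .refl
  | append_singleton w z ih =>
    have h1 : Relation.ReflTransGen RStep (w ++ [z]) (nf w ++ [z]) := rtg_append_right [z] ih
    have h2 : nf (w ++ [z]) = ins (nf w) z := by simp [nf, List.foldl_append]
    rw [h2]
    exact h1.trans (raise_ins (nf w) z)

lemma weakLE_of_rtg {s t : List ℕ} (h : Relation.ReflTransGen RStep s t) : WeakLE s t := by
  refine Relation.ReflTransGen.mono ?_ _ _ h
  rintro p q ⟨x, y, u, a, b, c, h1, h2, h3, h4, h5⟩
  exact ⟨x ++ b :: u, y, a, c, h1.trans h2, by simp [h5], by simp [h4]⟩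

lemma weakLE_nf (w : List ℕ) : WeakLE w (nf w) := weakLE_of_rtg (raise_nf w)

lemma bellCongr_of_rtg : ∀ {s t : List ℕ}, Relation.ReflTransGen RStep s t → BellCongr s t := by
  intro s t h
  induction h with
  | refl => exact Relation.EqvGen.refl s
  | tail _ hbc ih =>
      exact Relation.EqvGen.trans _ _ _ ih (Relation.EqvGen.symm _ _ (Relation.EqvGen.rel _ _ hbc))

lemma bellCongr_nf (w : List ℕ) : BellCongr w (nf w) := bellCongr_of_rtg (raise_nf w)

/-- `b` occurs in `v` and everything after it is smaller. -/
def SufMax (b : ℕ) (v : List ℕ) : Prop :=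
  ∃ v1 v2, v = v1 ++ b :: v2 ∧ ∀ x ∈ v2, x < b

lemma sufMax_ins_self (v : List ℕ) (b : ℕ) : SufMax b (ins v b) := by
  induction v with
  | nil => exact ⟨[], [], rfl, by simp⟩
  | cons h t ih =>
    simp only [ins]
    split_ifs with hc
    · exact ⟨[h], t, rfl, fun x hx => (hc.1 x hx).trans hc.2⟩
    · obtain ⟨v1, v2, he, hlt⟩ := ih
      exact ⟨h :: v1, v2, by simp [he], hlt⟩

lemma sufMax_ins (b z : ℕ) (hz : z < b) :
    ∀ (v : List ℕ), SufMax b v → SufMax b (ins v z) := by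
  intro v
  rintro ⟨v1, v2, rfl, hlt⟩
  induction v1 with
  | nil =>
    simp only [List.nil_append, ins]
    split_ifs with hc
    · omega
    · refine ⟨[], ins v2 z, rfl, fun x hx => ?_⟩
      rcases mem_ins.1 hx with rfl | hx
      · exact hz
      · exact hlt x hx
  | cons h v1 ih =>
    simp only [List.cons_append, ins]
    split_ifs with hc
    · exact ⟨h :: z :: v1, v2, by simp, hlt⟩
    · obtain ⟨w1, w2, he, hw⟩ := ih
      exact ⟨h :: w1, w2, by simp [he], hw⟩

lemma sufMax_foldl (b : ℕ) : ∀ (u v : List ℕ), (∀ z ∈ u, z < b) → SufMax b v →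
    SufMax b (List.foldl ins v u) := by
  intro u
  induction u with
  | nil => intro v _ hv; simpa using hv
  | cons z u ih =>
    intro v hu hv
    simp only [List.foldl_cons]
    exact ih _ (fun x hx => hu x (by simp [hx])) (sufMax_ins b z (hu z (by simp)) v hv)

lemma ins_pos {h z : ℕ} {t : List ℕ} (h1 : ∀ x ∈ t, x < h) (h2 : h < z) :
    ins (h :: t) z = h :: z :: t := by
  simp only [ins]; rw [if_pos ⟨h1, h2⟩]

lemma ins_neg {h z : ℕ} {t : List ℕ} (hn : ¬ ((∀ x ∈ t, x < h) ∧ h < z)) :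
    ins (h :: t) z = h :: ins t z := by
  simp only [ins]; rw [if_neg hn]

lemma ins_comm (a b c : ℕ) (hab : a < b) (hbc : b < c) :
    ∀ v : List ℕ, SufMax b v → a ∉ v → c ∉ v →
      ins (ins v c) a = ins (ins v a) c := by
  intro v
  induction v with
  | nil => rintro ⟨v1, v2, he, -⟩; simp at he
  | cons h t ih =>
    rintro ⟨v1, v2, he, hlt⟩ ha hc
    have hat : a ∉ t := fun hx => ha (by simp [hx])
    have hct : c ∉ t := fun hx => hc (by simp [hx])
    have hah : a ≠ h := fun hx => ha (by simp [hx])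
    have hch : c ≠ h := fun hx => hc (by simp [hx])
    rcases v1 with _ | ⟨h1, v1⟩
    · -- h = b, t = v2, all < b
      simp only [List.nil_append, List.cons.injEq] at he
      obtain ⟨rfl, rfl⟩ := he
      have hpa : ∀ x ∈ ins t a, x < h := by
        intro x hx
        rcases mem_ins.1 hx with rfl | hx
        · omega
        · exact hlt x hx
      have E1 : ins (h :: t) c = h :: c :: t := ins_pos hlt hbc
      have E2 : ins (h :: t) a = h :: ins t a :=
        ins_neg (by rintro ⟨-, hh⟩; omega)
      have E3 : ins (h :: c :: t) a = h :: ins (c :: t) a :=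
        ins_neg (by rintro ⟨hh, -⟩; exact absurd (hh c List.mem_cons_self) (by omega))
      have E4 : ins (c :: t) a = c :: ins t a :=
        ins_neg (by rintro ⟨-, hh⟩; omega)
      have E5 : ins (h :: ins t a) c = h :: c :: ins t a := ins_pos hpa hbc
      rw [E1, E3, E4, E2, E5]
    · -- h = h1, b ∈ t
      simp only [List.cons_append, List.cons.injEq] at he
      obtain ⟨rfl, rfl⟩ := he
      have hsm : SufMax b (v1 ++ b :: v2) := ⟨v1, v2, rfl, hlt⟩
      have hbt : b ∈ v1 ++ b :: v2 := by simp
      set t := v1 ++ b :: v2 with ht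
      by_cases hQ : ∀ x ∈ t, x < h
      · have hbh : b < h := hQ b hbt
        rcases lt_trichotomy h a with hha | hha | hha
        · omega
        · exact absurd hha.symm hah
        · rcases lt_trichotomy h c with hhc | hhc | hhc
          · -- a < h < c
            have hpa : ∀ x ∈ ins t a, x < h := by
              intro x hx
              rcases mem_ins.1 hx with rfl | hx
              · omega
              · exact hQ x hx
            have E1 : ins (h :: t) c = h :: c :: t := ins_pos hQ hhc
            have E2 : ins (h :: t) a = h :: ins t a :=
              ins_neg (by rintro ⟨-, hh⟩; omega)
            have E3 : ins (h :: c :: t) a = h :: ins (c :: t) a :=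
              ins_neg (by rintro ⟨hh, -⟩; exact absurd (hh c List.mem_cons_self) (by omega))
            have E4 : ins (c :: t) a = c :: ins t a :=
              ins_neg (by rintro ⟨-, hh⟩; omega)
            have E5 : ins (h :: ins t a) c = h :: c :: ins t a := ins_pos hpa hhc
            rw [E1, E3, E4, E2, E5]
          · exact absurd hhc.symm hch
          · -- c < h
            have hah' : a < h := by omega
            have E1 : ins (h :: t) c = h :: ins t c :=
              ins_neg (by rintro ⟨-, hh⟩; omega)
            have E2 : ins (h :: t) a = h :: ins t a :=
              ins_neg (by rintro ⟨-, hh⟩; omega)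
            have E3 : ins (h :: ins t c) a = h :: ins (ins t c) a :=
              ins_neg (by rintro ⟨-, hh⟩; omega)
            have E4 : ins (h :: ins t a) c = h :: ins (ins t a) c :=
              ins_neg (by rintro ⟨-, hh⟩; omega)
            rw [E1, E3, E2, E4, ih hsm hat hct]
      · push_neg at hQ
        obtain ⟨m, hm, hmh⟩ := hQ
        have hn1 : ¬ ∀ x ∈ t, x < h := fun hh => absurd (hh m hm) (by omega)
        have hnc : ¬ ∀ x ∈ ins t c, x < h :=
          fun hh => absurd (hh m (mem_ins.2 (Or.inr hm))) (by omega)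
        have hna : ¬ ∀ x ∈ ins t a, x < h :=
          fun hh => absurd (hh m (mem_ins.2 (Or.inr hm))) (by omega)
        have E1 : ins (h :: t) c = h :: ins t c :=
          ins_neg (by rintro ⟨hh, -⟩; exact hn1 hh)
        have E2 : ins (h :: t) a = h :: ins t a :=
          ins_neg (by rintro ⟨hh, -⟩; exact hn1 hh)
        have E3 : ins (h :: ins t c) a = h :: ins (ins t c) a :=
          ins_neg (by rintro ⟨hh, -⟩; exact hnc hh)
        have E4 : ins (h :: ins t a) c = h :: ins (ins t a) c :=
          ins_neg (by rintro ⟨hh, -⟩; exact hna hh)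
        rw [E1, E3, E2, E4, ih hsm hat hct]

lemma bellStep_perm {w w' : List ℕ} (h : BellStep w w') : w.Perm w' := by
  obtain ⟨x, y, u, a, b, c, -, -, -, rfl, rfl⟩ := h
  have := List.Perm.append_left (x ++ b :: u) (List.Perm.swap a c y)
  simpa using this

lemma nf_append_swap (p y : List ℕ) (a c : ℕ)
    (h : ins (ins (List.foldl ins [] p) c) a = ins (ins (List.foldl ins [] p) a) c) :
    nf (p ++ c :: a :: y) = nf (p ++ a :: c :: y) := by
  rw [nf, nf, List.foldl_append, List.foldl_append]
  simp only [List.foldl_cons, h]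

lemma nf_bellStep {w w' : List ℕ} (hd : w.Nodup) (h : BellStep w w') : nf w = nf w' := by
  obtain ⟨x, y, u, a, b, c, hab, hbc, hu, rfl, rfl⟩ := h
  have hx1 : x ++ b :: u ++ c :: a :: y = (x ++ b :: u) ++ (c :: a :: y) := by simp
  have hx2 : x ++ b :: u ++ a :: c :: y = (x ++ b :: u) ++ (a :: c :: y) := by simp
  rw [hx1] at hd ⊢
  rw [hx2]
  have hvp : (List.foldl ins [] (x ++ b :: u)).Perm (x ++ b :: u) := by
    simpa using foldl_ins_perm (x ++ b :: u) []
  have hsm : SufMax b (List.foldl ins [] (x ++ b :: u)) := by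
    rw [show x ++ b :: u = (x ++ [b]) ++ u by simp, List.foldl_append, List.foldl_append]
    simp only [List.foldl_cons, List.foldl_nil]
    exact sufMax_foldl b u _ hu (sufMax_ins_self _ b)
  have hdisj := (List.nodup_append'.mp hd).2.2
  have hav : a ∉ List.foldl ins [] (x ++ b :: u) := fun hx =>
    hdisj (hvp.subset hx) (by simp)
  have hcv : c ∉ List.foldl ins [] (x ++ b :: u) := fun hx =>
    hdisj (hvp.subset hx) (by simp)
  exact nf_append_swap _ y a c (ins_comm a b c hab hbc _ hsm hav hcv)

lemma bellCongr_perm_nf {w w' : List ℕ} (h : BellCongr w w') :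
    w.Perm w' ∧ (w.Nodup → nf w = nf w') := by
  induction h with
  | rel s t hst => exact ⟨bellStep_perm hst, fun hd => nf_bellStep hd hst⟩
  | refl s => exact ⟨List.Perm.refl s, fun _ => rfl⟩
  | symm s t _ ih =>
      exact ⟨ih.1.symm, fun hd => (ih.2 (ih.1.nodup_iff.mpr hd)).symm⟩
  | trans s t r _ _ ih1 ih2 =>
      exact ⟨ih1.1.trans ih2.1, fun hd => (ih1.2 hd).trans (ih2.2 (ih1.1.nodup_iff.mp hd))⟩

/-- decomposition form of pattern avoidance -/
def AvoidsD (w : List ℕ) : Prop :=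
  ∀ x d e y, w = x ++ d :: e :: y → e < d → ∀ f ∈ y, f < d

lemma avoidsD_nil : AvoidsD [] := by
  intro x d e y he
  exfalso
  have := congrArg List.length he
  simp at this

lemma avoidsD_cons {h : ℕ} {t : List ℕ} (H : AvoidsD (h :: t)) : AvoidsD t :=
  fun x d e y he => H (h :: x) d e y (by simp [he])

lemma avoidsD_init {u : List ℕ} {z : ℕ} (H : AvoidsD (u ++ [z])) : AvoidsD u := by
  intro x d e y he hde f hf
  exact H x d e (y ++ [z]) (by simp [he]) hde f (by simp [hf])

lemma ins_head (t0 z : ℕ) (t' : List ℕ) :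
    ∃ r, ins (t0 :: t') z = t0 :: r := by
  simp only [ins]
  split_ifs
  · exact ⟨z :: t', rfl⟩
  · exact ⟨ins t' z, rfl⟩

lemma ins_avoids (z : ℕ) : ∀ v : List ℕ, AvoidsD v → z ∉ v → AvoidsD (ins v z) := by
  intro v
  induction v with
  | nil =>
    intro _ _ x d e y he
    exfalso
    have := congrArg List.length he
    simp [ins] at this
    omega
  | cons h t ih =>
    intro H hz
    have hzt : z ∉ t := fun hx => hz (by simp [hx])
    have hzh : z ≠ h := fun hx => hz (by simp [hx])
    by_cases hC : (∀ x ∈ t, x < h) ∧ h < z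
    · rw [ins_pos hC.1 hC.2]
      intro x d e y he hde f hf
      rcases x with _ | ⟨x0, x⟩
      · obtain ⟨h1, h2, h3⟩ : h = d ∧ z = e ∧ t = y := by simpa using he
        exfalso
        have := hC.2
        omega
      · obtain ⟨h1, he2⟩ : h = x0 ∧ z :: t = x ++ d :: e :: y := by simpa using he
        rcases x with _ | ⟨x1, x⟩
        · obtain ⟨h2, h3⟩ : z = d ∧ t = e :: y := by simpa using he2
          have hfh : f < h := hC.1 f (by rw [h3]; simp [hf])
          have := hC.2
          omega
        · obtain ⟨h2, he3⟩ : z = x1 ∧ t = x ++ d :: e :: y := by simpa using he2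
          exact H (h :: x) d e y (by simp [he3]) hde f hf
    · rw [ins_neg hC]
      have H' : AvoidsD (ins t z) := ih (avoidsD_cons H) hzt
      intro x d e y he hde f hf
      rcases x with _ | ⟨x0, x⟩
      · obtain ⟨h1, hty⟩ : h = d ∧ ins t z = e :: y := by simpa using he
        by_cases hQ : ∀ x ∈ t, x < h
        · have hzd : z < h := by
            have h2 : ¬ h < z := fun hh => hC ⟨hQ, hh⟩
            omega
          have hfm : f ∈ ins t z := by rw [hty]; simp [hf]
          rcases mem_ins.1 hfm with rfl | hf'
          · omega
          · have := hQ f hf'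
            omega
        · push_neg at hQ
          obtain ⟨m, hm, hmd⟩ := hQ
          rcases t with _ | ⟨t0, t'⟩
          · simp at hm
          · obtain ⟨r, hr⟩ := ins_head t0 z t'
            rw [hr] at hty
            obtain ⟨h2, h3⟩ : t0 = e ∧ r = y := by simpa using hty
            exfalso
            have ht0h : t0 < h := by omega
            have hall := H [] h t0 t' rfl ht0h
            rcases List.mem_cons.mp hm with rfl | hm'
            · omega
            · exact absurd (hall m hm') (by omega)
      · obtain ⟨h1, he2⟩ : h = x0 ∧ ins t z = x ++ d :: e :: y := by simpa using he
        exact H' x d e y he2 hde f hf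

lemma nf_avoids : ∀ w : List ℕ, w.Nodup → AvoidsD (nf w) := by
  intro w
  induction w using List.reverseRecOn with
  | nil => exact fun _ => avoidsD_nil
  | append_singleton w z ih =>
    intro hd
    have hd' : w.Nodup := (List.nodup_append'.mp hd).1
    have hzw : z ∉ w := fun hx => (List.nodup_append'.mp hd).2.2 hx (by simp)
    have hznf : z ∉ nf w := fun hx => hzw ((nf_perm w).subset hx)
    have : nf (w ++ [z]) = ins (nf w) z := by simp [nf, List.foldl_append]
    rw [this]
    exact ins_avoids z (nf w) (ih hd') hznf

lemma ins_of_avoidsD (z : ℕ) : ∀ v : List ℕ, AvoidsD (v ++ [z]) → ins v z = v ++ [z] := by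
  intro v
  induction v with
  | nil => simp [ins]
  | cons h t ih =>
    intro H
    rcases t with _ | ⟨t0, t'⟩
    · simp only [ins]
      split_ifs <;> simp [ins]
    · have hC : ¬ ((∀ x ∈ t0 :: t', x < h) ∧ h < z) := by
        rintro ⟨hQ, hzgt⟩
        have ht0 : t0 < h := hQ t0 (by simp)
        have hall := H [] h t0 (t' ++ [z]) (by simp) ht0
        exact absurd (hall z (by simp)) (by omega)
      rw [ins_neg hC, ih (avoidsD_cons H)]
      simp

lemma nf_of_avoidsD : ∀ w : List ℕ, AvoidsD w → nf w = w := by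
  intro w
  induction w using List.reverseRecOn with
  | nil => intro _; rfl
  | append_singleton w z ih =>
    intro H
    have h1 : nf (w ++ [z]) = ins (nf w) z := by simp [nf, List.foldl_append]
    rw [h1, ih (avoidsD_init H), ins_of_avoidsD z w H]

/-- number of inversions -/
def inv : List ℕ → ℕ
  | [] => 0
  | h :: t => t.countP (fun x => decide (x < h)) + inv t

lemma inv_append (s t : List ℕ) :
    inv (s ++ t) = inv s + inv t + (s.map (fun h => t.countP (fun x => decide (x < h)))).sum := by
  induction s with
  | nil => simp [inv]
  | cons h s ih =>
    simp only [List.cons_append, inv, List.append_eq, List.countP_append, List.map_cons,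
      List.sum_cons, ih]
    omega

lemma weakStep_inv {s t : List ℕ} (h : WeakStep s t) : inv t = inv s + 1 := by
  obtain ⟨x, y, a, b, hab, rfl, rfl⟩ := h
  rw [inv_append, inv_append]
  have hperm : (a :: b :: y).Perm (b :: a :: y) := List.Perm.swap b a y
  have hcount : ∀ h : ℕ, (a :: b :: y).countP (fun x => decide (x < h)) =
      (b :: a :: y).countP (fun x => decide (x < h)) := fun h => hperm.countP_eq _
  have h1 : inv (b :: a :: y) = inv (a :: b :: y) + 1 := by
    simp only [inv, List.countP_cons]
    have hba : ¬ (b < a) := by omega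
    simp [hab, hba]
    ring
  simp only [h1]
  have h2 : (x.map (fun h => (a :: b :: y).countP (fun x => decide (x < h)))).sum =
      (x.map (fun h => (b :: a :: y).countP (fun x => decide (x < h)))).sum := by
    congr 1
    exact List.map_congr_left (fun h _ => hcount h)
  omega

lemma weakLE_inv {s t : List ℕ} (h : WeakLE s t) : inv s ≤ inv t := by
  induction h with
  | refl => exact le_refl _
  | tail _ hst ih => rw [weakStep_inv hst]; omega

lemma weakLE_antisymm {s t : List ℕ} (h1 : WeakLE s t) (h2 : WeakLE t s) : s = t := by
  rcases (Relation.ReflTransGen.cases_head h1) with rfl | ⟨m, hsm, hmt⟩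
  · rfl
  · exfalso
    have := weakStep_inv hsm
    have := weakLE_inv hmt
    have := weakLE_inv h2
    omega

lemma index_of_avoidsD {w : List ℕ} (H : AvoidsD w) : Avoids21dash3 w := by
  rintro ⟨p, q, hpq, hq, h1, h2⟩
  have hp1 : p + 1 < w.length := by omega
  have hp : p < w.length := by omega
  have hw : w = w.take p ++ w[p] :: w[p+1] :: w.drop (p+2) := by
    conv_lhs => rw [← List.take_append_drop p w]
    congr 1
    rw [List.drop_eq_getElem_cons hp]
    congr 1
    exact List.drop_eq_getElem_cons hp1
  have hqd : q - (p+2) < (w.drop (p+2)).length := by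
    rw [List.length_drop]; omega
  have hfeq : (w.drop (p+2))[q - (p+2)]'hqd = w[q] := by
    rw [List.getElem_drop]
    congr 1
    omega
  have hfmem : w[q] ∈ w.drop (p+2) := by
    rw [← hfeq]; exact List.getElem_mem hqd
  rw [List.getD_eq_getElem w 0 hp1, List.getD_eq_getElem w 0 hp] at h1
  rw [List.getD_eq_getElem w 0 hp, List.getD_eq_getElem w 0 hq] at h2
  have h3 := H (w.take p) (w[p]) (w[p+1]) (w.drop (p+2)) hw h1 (w[q]) hfmem
  omega

lemma avoidsD_of_index {w : List ℕ} (hd : w.Nodup) (H : Avoids21dash3 w) : AvoidsD w := by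
  intro x d e y he hde f hf
  by_contra hfd
  have hfd' : d < f := by
    rcases Nat.lt_trichotomy f d with h | h | h
    · exact absurd h hfd
    · exfalso
      subst h
      rw [he] at hd
      have h2 := (List.nodup_append.mp hd).2.1
      exact (List.nodup_cons.mp h2).1 (by simp [hf])
    · exact h
  obtain ⟨i, hi, hfi⟩ := List.getElem_of_mem hf
  apply H
  have e1 : (x ++ d :: e :: y).getD x.length 0 = d := by
    rw [List.getD_append_right _ _ _ _ (le_refl x.length)]
    simp
  have e2 : (x ++ d :: e :: y).getD (x.length + 1) 0 = e := by
    rw [List.getD_append_right _ _ _ _ (by omega)]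
    rw [show x.length + 1 - x.length = 1 by omega]
    simp
  have e3 : (x ++ d :: e :: y).getD (x.length + 2 + i) 0 = f := by
    rw [List.getD_append_right _ _ _ _ (by omega)]
    rw [show x.length + 2 + i - x.length = i + 2 by omega]
    simp only [List.getD_cons_succ]
    rw [List.getD_eq_getElem _ 0 hi, hfi]
  refine ⟨x.length, x.length + 2 + i, by omega, ?_, ?_, ?_⟩
  · rw [he]
    simp only [List.length_append, List.length_cons]
    omega
  · rw [he, e1, e2]
    exact hde
  · rw [he, e1, e3]
    exact hfd'

/-- Every Bell congruence class of permutations of `{1,…,n}` has a unique greatest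
element for the right weak order, this greatest element avoids the dashed pattern
`21-3`, and every `21-3`-avoiding permutation is the greatest element of its own Bell
class; hence the map sending a class to its greatest element is a bijection from the
Bell classes of `S_n` onto the `21-3`-avoiding permutations of `S_n`. -/
theorem bell_class_greatest_element (n : ℕ) :
    (∀ σ : List ℕ, σ.Perm ((List.range n).map (· + 1)) →
      ∃! μ : List ℕ, BellCongr σ μ ∧ ∀ ρ : List ℕ, BellCongr σ ρ → WeakLE ρ μ) ∧
    (∀ σ μ : List ℕ, σ.Perm ((List.range n).map (· + 1)) →
      BellCongr σ μ → (∀ ρ : List ℕ, BellCongr σ ρ → WeakLE ρ μ) →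
      Avoids21dash3 μ) ∧
    (∀ μ : List ℕ, μ.Perm ((List.range n).map (· + 1)) → Avoids21dash3 μ →
      ∀ ρ : List ℕ, BellCongr μ ρ → WeakLE ρ μ) := by
  have nodup_of_perm : ∀ σ : List ℕ, σ.Perm ((List.range n).map (· + 1)) → σ.Nodup := by
    intro σ h
    refine h.nodup_iff.mpr ?_
    exact (List.nodup_range (n := n)).map (fun a b hab => by omega)
  have greatest : ∀ σ : List ℕ, σ.Nodup → ∀ ρ, BellCongr σ ρ → WeakLE ρ (nf σ) := by
    intro σ hσ ρ hρ
    have h1 : nf ρ = nf σ := ((bellCongr_perm_nf hρ).2 hσ).symm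
    rw [← h1]
    exact weakLE_nf ρ
  refine ⟨fun σ hσ => ?_, fun σ μ hσ hc hg => ?_, fun μ hμ hav ρ hc => ?_⟩
  · have hd := nodup_of_perm σ hσ
    refine ⟨nf σ, ⟨bellCongr_nf σ, greatest σ hd⟩, ?_⟩
    rintro μ' ⟨hc', hg'⟩
    exact weakLE_antisymm (greatest σ hd μ' hc') (hg' (nf σ) (bellCongr_nf σ))
  · have hd := nodup_of_perm σ hσ
    have hμ : μ = nf σ :=
      weakLE_antisymm (greatest σ hd μ hc) (hg (nf σ) (bellCongr_nf σ))
    rw [hμ]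
    exact index_of_avoidsD (nf_avoids σ hd)
  · have hd := nodup_of_perm μ hμ
    have h1 : nf μ = μ := nf_of_avoidsD μ (avoidsD_of_index hd hav)
    have h2 : nf ρ = nf μ := ((bellCongr_perm_nf hc).2 hd).symm
    have h3 := weakLE_nf ρ
    rw [h2, h1] at h3
    exact h3
end

section
/- For every set partition S of a finite set of integers, the Bell poset P(S) is regular: for all elements x, z of the underlying set with x <_P z, and every element y of the underlying set satisfying either x < y < z or x > y > z in the usual integer order, one has x <_P y or y <_P z. -/
/-- The generating relations of the Bell poset `P(S)`: `bellBase S y x` holds when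
either `x, y` lie in the same block and `y` is the greatest element of that block
smaller than `x`, or `x` lies in a block `B`, `y` lies in the block `B'` immediately
to the left of `B` (the block whose maximum is least among those greater than the
maximum of `B`), and `y` is the smallest element of `B'` greater than `x`. -/
def bellBase (S : Finset (Finset ℕ)) (y x : ℕ) : Prop :=
  (∃ B ∈ S, x ∈ B ∧ y ∈ B ∧ y < x ∧ ∀ z ∈ B, z < x → z ≤ y) ∨
  (∃ B ∈ S, ∃ B' ∈ S, x ∈ B ∧ y ∈ B' ∧ B.max < B'.max ∧
    (∀ C ∈ S, B.max < C.max → B'.max ≤ C.max) ∧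
    x < y ∧ ∀ z ∈ B', x < z → y ≤ z)

/-- The order relation `<_P` of the Bell poset `P(S)`: the transitive closure of the
generating relations. -/
def bellLT (S : Finset (Finset ℕ)) : ℕ → ℕ → Prop :=
  Relation.TransGen (bellBase S)

/-- Distinct blocks of a partition have distinct maxima. -/
lemma bell_max_ne (S : Finset (Finset ℕ))
    (hne : ∀ B ∈ S, B.Nonempty)
    (hdisj : ∀ B ∈ S, ∀ C ∈ S, B ≠ C → Disjoint B C)
    {B C : Finset ℕ} (hB : B ∈ S) (hC : C ∈ S) (h : B ≠ C) :
    B.max ≠ C.max := by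
  intro heq
  have hBne := hne B hB
  have hb : B.max' hBne ∈ B := Finset.max'_mem B hBne
  have hmax : B.max = (B.max' hBne : WithBot ℕ) := (Finset.coe_max' hBne).symm
  have hbc : B.max' hBne ∈ C := Finset.mem_of_max (heq.symm.trans hmax)
  exact (Finset.disjoint_left.mp (hdisj B hB C hC h)) hb hbc

/-- Within a block, any smaller element is below any larger element. -/
lemma bell_chain_block (S : Finset (Finset ℕ)) {B : Finset ℕ} (hB : B ∈ S)
    {x : ℕ} (hx : x ∈ B) : ∀ u, u ∈ B → x < u → bellLT S x u := by
  intro u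
  induction u using Nat.strong_induction_on with
  | _ u ih =>
    intro hu hlt
    have hTne : (B.filter (· < u)).Nonempty := ⟨x, Finset.mem_filter.mpr ⟨hx, hlt⟩⟩
    set v := (B.filter (· < u)).max' hTne with hv
    have hvmem := Finset.mem_filter.mp ((B.filter (· < u)).max'_mem hTne)
    have hbase : bellBase S v u := by
      left
      exact ⟨B, hB, hu, hvmem.1, hvmem.2,
        fun w hw hwu => Finset.le_max' (B.filter (· < u)) w (Finset.mem_filter.mpr ⟨hw, hwu⟩)⟩
    have hxv : x ≤ v := Finset.le_max' (B.filter (· < u)) x (Finset.mem_filter.mpr ⟨hx, hlt⟩)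
    rcases eq_or_lt_of_le hxv with h | h
    · exact Relation.TransGen.single (h ▸ hbase)
    · exact Relation.TransGen.tail (ih v hvmem.2 hvmem.1 h) hbase

/-- Cross-block descent: if `y` lies in a block `C`, `x` lies in a block `B` of
strictly larger maximum, and `x` is at most every element of `B` exceeding `y`,
then `x <_P y`. -/
lemma bell_chain_cross (S : Finset (Finset ℕ))
    (hne : ∀ B ∈ S, B.Nonempty)
    (hdisj : ∀ B ∈ S, ∀ C ∈ S, B ≠ C → Disjoint B C) :
    ∀ n : ℕ, ∀ C : Finset ℕ, C ∈ S → ∀ y ∈ C, ∀ B ∈ S, ∀ x ∈ B,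
      (S.filter (fun D => C.max < D.max)).card ≤ n →
      C.max < B.max → (∀ w ∈ B, y < w → x ≤ w) → bellLT S x y := by
  intro n
  induction n with
  | zero =>
    intro C hC y hy B hB x hx hcard hmax _
    have h1 : 0 < (S.filter (fun D => C.max < D.max)).card :=
      Finset.card_pos.mpr ⟨B, Finset.mem_filter.mpr ⟨hB, hmax⟩⟩
    omega
  | succ n ih =>
    intro C hC y hy B hB x hx hcard hmax H
    set T := S.filter (fun D => C.max < D.max) with hT
    have hBT : B ∈ T := Finset.mem_filter.mpr ⟨hB, hmax⟩
    obtain ⟨B₁, hB₁T, hmin⟩ := T.exists_min_image Finset.max ⟨B, hBT⟩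
    have hB₁S : B₁ ∈ S := (Finset.mem_filter.mp hB₁T).1
    have hCB₁ : C.max < B₁.max := (Finset.mem_filter.mp hB₁T).2
    -- the smallest element of B₁ greater than y
    have hB₁ne := hne B₁ hB₁S
    have hm : y < B₁.max' hB₁ne := by
      have h2 := lt_of_le_of_lt (Finset.le_max hy) hCB₁
      rw [← Finset.coe_max' hB₁ne] at h2
      exact WithBot.coe_lt_coe.mp h2
    have hFne : (B₁.filter (fun t => y < t)).Nonempty :=
      ⟨B₁.max' hB₁ne, Finset.mem_filter.mpr ⟨Finset.max'_mem _ _, hm⟩⟩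
    set u := (B₁.filter (fun t => y < t)).min' hFne with hu
    have humem := Finset.mem_filter.mp ((B₁.filter (fun t => y < t)).min'_mem hFne)
    have husm : ∀ w ∈ B₁, y < w → u ≤ w :=
      fun w hw hyw => Finset.min'_le (B₁.filter (fun t => y < t)) w (Finset.mem_filter.mpr ⟨hw, hyw⟩)
    have hbase : bellBase S u y := by
      right
      exact ⟨C, hC, B₁, hB₁S, hy, humem.1, hCB₁,
        fun D hD hCD => hmin D (Finset.mem_filter.mpr ⟨hD, hCD⟩), humem.2, husm⟩
    by_cases hBB : B₁ = B
    · subst hBB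
      have hxu : x ≤ u := H u humem.1 humem.2
      rcases eq_or_lt_of_le hxu with h | h
      · exact Relation.TransGen.single (h ▸ hbase)
      · exact Relation.TransGen.tail (bell_chain_block S hB₁S hx u humem.1 h) hbase
    · have hmaxne : B₁.max ≠ B.max := bell_max_ne S hne hdisj hB₁S hB hBB
      have hB₁B : B₁.max < B.max := lt_of_le_of_ne (hmin B hBT) hmaxne
      have hsub : S.filter (fun D => B₁.max < D.max) ⊂ T := by
        constructor
        · intro D hD
          have := Finset.mem_filter.mp hD
          exact Finset.mem_filter.mpr ⟨this.1, lt_trans hCB₁ this.2⟩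
        · intro hcontra
          have := Finset.mem_filter.mp (hcontra hB₁T)
          exact lt_irrefl _ this.2
      have hcard' : (S.filter (fun D => B₁.max < D.max)).card ≤ n := by
        have := Finset.card_lt_card hsub
        omega
      have hrec : bellLT S x u :=
        ih B₁ hB₁S u humem.1 B hB x hx hcard' hB₁B
          (fun w hw hlt => H w hw (lt_trans humem.2 hlt))
      exact Relation.TransGen.tail hrec hbase

lemma bell_cross (S : Finset (Finset ℕ))
    (hne : ∀ B ∈ S, B.Nonempty)
    (hdisj : ∀ B ∈ S, ∀ C ∈ S, B ≠ C → Disjoint B C)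
    {C B : Finset ℕ} {y x : ℕ} (hC : C ∈ S) (hy : y ∈ C) (hB : B ∈ S) (hx : x ∈ B)
    (hmax : C.max < B.max) (H : ∀ w ∈ B, y < w → x ≤ w) : bellLT S x y :=
  bell_chain_cross S hne hdisj _ C hC y hy B hB x hx le_rfl hmax H

/-- Single-step regularity. -/
lemma bell_step (S : Finset (Finset ℕ))
    (hne : ∀ B ∈ S, B.Nonempty)
    (hdisj : ∀ B ∈ S, ∀ C ∈ S, B ≠ C → Disjoint B C)
    {x z : ℕ} (hxz : bellBase S x z)
    {y : ℕ} {C : Finset ℕ} (hC : C ∈ S) (hyC : y ∈ C)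
    (hb : (x < y ∧ y < z) ∨ (z < y ∧ y < x)) :
    bellLT S x y ∨ bellLT S y z := by
  rcases hxz with ⟨B, hB, hzB, hxB, hxltz, hgr⟩ |
      ⟨B, hB, B', hB', hzB, hxB', hmaxBB', hminB', hzx, hsm⟩
  · -- same-block step, x < z, so x < y < z
    obtain ⟨hxy, hyz⟩ : x < y ∧ y < z := by omega
    by_cases hCB : C = B
    · subst hCB
      exact absurd (hgr y hyC hyz) (by omega)
    · rcases lt_or_gt_of_ne (bell_max_ne S hne hdisj hC hB hCB) with h | h
      · exact Or.inl (bell_cross S hne hdisj hC hyC hB hxB h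
          (fun w hw hyw => le_of_lt (lt_trans hxy hyw)))
      · exact Or.inr (bell_cross S hne hdisj hB hzB hC hyC h
          (fun w hw hzw => le_of_lt (lt_trans hyz hzw)))
  · -- cross-block step, z < x, so z < y < x
    obtain ⟨hzy, hyx⟩ : z < y ∧ y < x := by omega
    by_cases hCB' : C = B'
    · subst hCB'
      exact absurd (hsm y hyC hzy) (by omega)
    · rcases lt_or_gt_of_ne (bell_max_ne S hne hdisj hC hB' hCB') with h | h
      · exact Or.inl (bell_cross S hne hdisj hC hyC hB' hxB' h
          (fun w hw hyw => hsm w hw (lt_trans hzy hyw)))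
      · have hyx' : bellLT S y x := bell_cross S hne hdisj hB' hxB' hC hyC h
          (fun w hw hxw => le_of_lt (lt_trans hyx hxw))
        exact Or.inr (Relation.TransGen.tail hyx'
          (Or.inr ⟨B, hB, B', hB', hzB, hxB', hmaxBB', hminB', hzx, hsm⟩))

/-- Bell posets are regular: if `S` is a set partition of a finite set of integers,
`x <_P z`, and `y` is an element of the ground set with `x < y < z` or `x > y > z`
in the usual integer order, then `x <_P y` or `y <_P z`. -/
theorem bell_poset_regular (S : Finset (Finset ℕ))
    (hne : ∀ B ∈ S, B.Nonempty)
    (hdisj : ∀ B ∈ S, ∀ C ∈ S, B ≠ C → Disjoint B C)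
    (x y z : ℕ) (hy : y ∈ S.sup id)
    (hxz : bellLT S x z)
    (hbetween : (x < y ∧ y < z) ∨ (z < y ∧ y < x)) :
    bellLT S x y ∨ bellLT S y z := by
  obtain ⟨C, hC, hyC⟩ := Finset.mem_sup.mp hy
  clear hy
  revert hbetween
  induction hxz with
  | single h =>
    intro hb
    exact bell_step S hne hdisj h hC hyC hb
  | tail hxb h ih =>
    intro hb
    rename_i b c
    rcases lt_trichotomy y b with hyb | hyb | hyb
    · rcases hb with ⟨h1, h2⟩ | ⟨h1, h2⟩
      · -- x < y < c, y < b : x < y < b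
        rcases ih (Or.inl ⟨h1, hyb⟩) with h' | h'
        · exact Or.inl h'
        · exact Or.inr (Relation.TransGen.tail h' h)
      · -- c < y < x, y < b : c < y < b, use single step on (b, c)
        rcases bell_step S hne hdisj h hC hyC (Or.inr ⟨h1, hyb⟩) with h' | h'
        · exact Or.inl (Relation.TransGen.trans hxb h')
        · exact Or.inr h'
    · subst hyb
      exact Or.inl hxb
    · rcases hb with ⟨h1, h2⟩ | ⟨h1, h2⟩
      · -- x < y < c, b < y : b < y < c, use single step on (b, c)
        rcases bell_step S hne hdisj h hC hyC (Or.inl ⟨hyb, h2⟩) with h' | h'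
        · exact Or.inl (Relation.TransGen.trans hxb h')
        · exact Or.inr h'
      · -- c < y < x, b < y : b < y < x
        rcases ih (Or.inr ⟨hyb, h2⟩) with h' | h'
        · exact Or.inl h'
        · exact Or.inr (Relation.TransGen.tail h' h)
end

section
/- Let σ ∈ S_k and τ ∈ S_ℓ. Then the set {γ ∈ S_{k+ℓ} : γ ∈ σ′ ⧢ τ′[k] for some σ′ Bell congruent to σ and some τ′ Bell congruent to τ} is a union of Bell congruence classes of S_{k+ℓ}. -/
/-- The shuffle product of two words, as a multiset of words. -/
def sh {α : Type*} : List α → List α → Multiset (List α)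
  | [], v => {v}
  | u, [] => {u}
  | a :: u, b :: v => ((sh u (b :: v)).map (a :: ·)) + ((sh (a :: u) v).map (b :: ·))
termination_by u v => u.length + v.length
decreasing_by all_goals (simp [List.length_cons]; try omega)

lemma sh_nil_left {α : Type*} (v : List α) : sh [] v = {v} := by simp [sh]
lemma sh_nil_right {α : Type*} (u : List α) : sh u [] = {u} := by cases u <;> simp [sh]
lemma sh_cons_cons {α : Type*} (a b : α) (u v : List α) :
    sh (a :: u) (b :: v) = ((sh u (b :: v)).map (a :: ·)) + ((sh (a :: u) v).map (b :: ·)) := by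
  simp [sh]

lemma mem_sh_cons_left {α : Type*} {u v w : List α} (a : α) (h : w ∈ sh u v) :
    a :: w ∈ sh (a :: u) v := by
  cases v with
  | nil => simp_all [sh_nil_right]
  | cons b v =>
    rw [sh_cons_cons]
    exact Multiset.mem_add.2 (Or.inl (Multiset.mem_map.2 ⟨w, h, rfl⟩))

lemma mem_sh_cons_right {α : Type*} {u v w : List α} (b : α) (h : w ∈ sh u v) :
    b :: w ∈ sh u (b :: v) := by
  cases u with
  | nil => simp_all [sh_nil_left]
  | cons a u =>
    rw [sh_cons_cons]
    exact Multiset.mem_add.2 (Or.inr (Multiset.mem_map.2 ⟨w, h, rfl⟩))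

lemma filter_of_mem_sh {α : Type*} (p : α → Bool) :
    ∀ (u v w : List α), (∀ x ∈ u, p x = true) → (∀ x ∈ v, p x = false) →
      w ∈ sh u v → w.filter p = u ∧ w.filter (fun x => !p x) = v := by
  intro u v
  induction u, v using sh.induct with
  | case1 v =>
    intro w _ hv hw
    rw [sh_nil_left] at hw
    simp only [Multiset.mem_singleton] at hw
    subst hw
    constructor
    · exact List.filter_eq_nil_iff.2 (by simpa using hv)
    · exact List.filter_eq_self.2 (by simp [hv]; exact hv)
  | case2 u _ =>
    intro w hu _ hw
    rw [sh_nil_right] at hw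
    simp only [Multiset.mem_singleton] at hw
    subst hw
    constructor
    · exact List.filter_eq_self.2 hu
    · exact List.filter_eq_nil_iff.2 (by simp [hu]; exact hu)
  | case3 a u b v ih1 ih2 =>
    intro w hu hv hw
    rw [sh_cons_cons, Multiset.mem_add] at hw
    rcases hw with hw | hw
    · obtain ⟨w₀, hw₀, rfl⟩ := Multiset.mem_map.1 hw
      have ha : p a = true := hu a (by simp)
      obtain ⟨h1, h2⟩ := ih1 w₀ (fun x hx => hu x (by simp [hx])) hv hw₀
      simp [List.filter_cons, ha, h1, h2]
    · obtain ⟨w₀, hw₀, rfl⟩ := Multiset.mem_map.1 hw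
      have hb : p b = false := hv b (by simp)
      obtain ⟨h1, h2⟩ := ih2 w₀ hu (fun x hx => hv x (by simp [hx])) hw₀
      simp [List.filter_cons, hb, h1, h2]

lemma mem_sh_of_filter {α : Type*} (p : α → Bool) :
    ∀ (w u v : List α), w.filter p = u → w.filter (fun x => !p x) = v → w ∈ sh u v := by
  intro w
  induction w with
  | nil =>
    intro u v h1 h2
    simp only [List.filter_nil] at h1 h2
    subst h1; subst h2
    simp [sh_nil_left]
  | cons h t ih =>
    intro u v h1 h2
    cases hp : p h with
    | true =>
      rw [List.filter_cons_of_pos hp] at h1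
      rw [List.filter_cons_of_neg (by simp [hp])] at h2
      subst h1
      exact mem_sh_cons_left h (ih _ _ rfl h2)
    | false =>
      rw [List.filter_cons_of_neg (by simp [hp])] at h1
      rw [List.filter_cons_of_pos (by simp [hp])] at h2
      subst h2
      exact mem_sh_cons_right h (ih _ _ h1 rfl)

lemma bellCongr_perm {w w' : List ℕ} (h : BellCongr w w') : w.Perm w' := by
  induction h with
  | rel _ _ h => exact bellStep_perm h
  | refl _ => exact List.Perm.refl _
  | symm _ _ _ ih => exact ih.symm
  | trans _ _ _ _ _ ih1 ih2 => exact ih1.trans ih2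

lemma bellStep_map_sub {k : ℕ} {w w' : List ℕ} (h : BellStep w w') (hw : ∀ z ∈ w, k < z) :
    BellStep (w.map (· - k)) (w'.map (· - k)) := by
  obtain ⟨x, y, u, a, b, c, hab, hbc, hu, rfl, rfl⟩ := h
  have hb : k < b := hw b (by simp)
  have ha : k < a := hw a (by simp)
  have hc : k < c := hw c (by simp)
  refine ⟨x.map (· - k), y.map (· - k), u.map (· - k), a - k, b - k, c - k, ?_, ?_, ?_, ?_, ?_⟩
  · omega
  · omega
  · intro z hz
    obtain ⟨z₀, hz₀, rfl⟩ := List.mem_map.1 hz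
    have := hu z₀ hz₀
    have := hw z₀ (by simp [hz₀])
    omega
  · simp
  · simp

lemma key (k : ℕ) {γ γ' σ' τ' : List ℕ}
    (hσm : ∀ x ∈ σ', x ≤ k) (hτm : ∀ x ∈ τ', 1 ≤ x)
    (hstep : BellStep γ γ')
    (hmem : γ ∈ sh σ' (τ'.map (· + k))) :
    ∃ σ'' τ'' : List ℕ,
      (σ'' = σ' ∨ BellStep σ' σ'') ∧ (τ'' = τ' ∨ BellStep τ' τ'') ∧
      γ' ∈ sh σ'' (τ''.map (· + k)) := by
  set p : ℕ → Bool := fun z => decide (z ≤ k) with hp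
  have hτq : ∀ x ∈ τ'.map (· + k), p x = false := by
    intro x hx
    obtain ⟨t, ht, rfl⟩ := List.mem_map.1 hx
    have := hτm t ht
    simp [hp]; omega
  have hσp : ∀ x ∈ σ', p x = true := by
    intro x hx; simp [hp]; exact hσm x hx
  obtain ⟨h1, h2⟩ := filter_of_mem_sh p σ' _ γ hσp hτq hmem
  obtain ⟨x, y, u, a, b, c, hab, hbc, hu, hγ, hγ'⟩ := hstep
  subst hγ; subst hγ'
  by_cases hck : c ≤ k
  · -- both letters small: Bell step happens inside σ'
    have hbk : b ≤ k := by omega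
    have hak : a ≤ k := by omega
    have hufp : u.filter p = u := List.filter_eq_self.2 fun z hz => by
      have := hu z hz; simp [hp]; omega
    have hufq : u.filter (fun z => !p z) = [] := List.filter_eq_nil_iff.2 fun z hz => by
      have := hu z hz; simp [hp]; omega
    refine ⟨x.filter p ++ b :: u ++ a :: c :: y.filter p, τ',
      Or.inr ⟨x.filter p, y.filter p, u, a, b, c, hab, hbc, hu, ?_, rfl⟩, Or.inl rfl, ?_⟩
    · rw [← h1]
      simp [hp, List.filter_append, List.filter_cons, hak, hbk, hck, hufp]; exact fun z hz => ((hu z hz).trans_le hbk).le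
    · apply mem_sh_of_filter p
      · simp [hp, List.filter_append, List.filter_cons, hak, hbk, hck, hufp]; exact fun z hz => ((hu z hz).trans_le hbk).le
      · rw [← h2]
        simp [hp, List.filter_append, List.filter_cons, hak, hbk, hck, hufq]
  · by_cases hak : k < a
    · -- both letters large: Bell step happens inside τ'
      have hbk : k < b := by omega
      have hck' : k < c := by omega
      set q : ℕ → Bool := fun z => !p z with hq
      have hτeq : τ'.map (· + k) =
          x.filter q ++ b :: u.filter q ++ c :: a :: y.filter q := by
        rw [← h2]
        simp [hq, hp, List.filter_append, List.filter_cons, hak, hbk, hck']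
      set m : List ℕ := x.filter q ++ b :: u.filter q ++ a :: c :: y.filter q with hm
      have hstep2 : BellStep (τ'.map (· + k)) m :=
        ⟨x.filter q, y.filter q, u.filter q, a, b, c, hab, hbc,
          fun z hz => hu z (List.mem_of_mem_filter hz), hτeq, rfl⟩
      have hτbig : ∀ z ∈ τ'.map (· + k), k < z := by
        intro z hz
        obtain ⟨t, ht, rfl⟩ := List.mem_map.1 hz
        have := hτm t ht; omega
      have hmbig : ∀ z ∈ m, k < z := fun z hz =>
        hτbig z ((bellStep_perm hstep2).mem_iff.2 hz)
      have hstep3 := bellStep_map_sub hstep2 hτbig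
      have hτsub : (τ'.map (· + k)).map (· - k) = τ' := by
        rw [List.map_map]
        conv_rhs => rw [← List.map_id τ']
        exact List.map_congr_left fun z hz => by simp
      rw [hτsub] at hstep3
      have hmeq : (m.map (· - k)).map (· + k) = m := by
        rw [List.map_map]
        conv_rhs => rw [← List.map_id m]
        exact List.map_congr_left fun z hz => by
          have := hmbig z hz; simp; omega
      refine ⟨σ', m.map (· - k), Or.inl rfl, Or.inr hstep3, ?_⟩
      apply mem_sh_of_filter p
      · rw [← h1]
        simp [hp, List.filter_append, List.filter_cons, hak, hbk, hck']
      · rw [hmeq]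
        simp only [hm, hq]
        simp [hp, List.filter_append, List.filter_cons, hak, hbk, hck']
    · -- mixed case
      push_neg at hak
      refine ⟨σ', τ', Or.inl rfl, Or.inl rfl, ?_⟩
      apply mem_sh_of_filter p
      · rw [← h1]
        by_cases hbk : b ≤ k <;>
          simp [hp, List.filter_append, List.filter_cons, hak, hck, hbk]
      · rw [← h2]
        by_cases hbk : b ≤ k <;>
          simp [hp, List.filter_append, List.filter_cons, hak, hck, hbk]

lemma key' (k : ℕ) {γ γ' σ' τ' : List ℕ}
    (hσm : ∀ x ∈ σ', x ≤ k) (hτm : ∀ x ∈ τ', 1 ≤ x)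
    (hstep : BellStep γ γ')
    (hmem : γ' ∈ sh σ' (τ'.map (· + k))) :
    ∃ σ'' τ'' : List ℕ,
      (σ'' = σ' ∨ BellStep σ'' σ') ∧ (τ'' = τ' ∨ BellStep τ'' τ') ∧
      γ ∈ sh σ'' (τ''.map (· + k)) := by
  set p : ℕ → Bool := fun z => decide (z ≤ k) with hp
  have hτq : ∀ x ∈ τ'.map (· + k), p x = false := by
    intro x hx
    obtain ⟨t, ht, rfl⟩ := List.mem_map.1 hx
    have := hτm t ht
    simp [hp]; omega
  have hσp : ∀ x ∈ σ', p x = true := by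
    intro x hx; simp [hp]; exact hσm x hx
  obtain ⟨h1, h2⟩ := filter_of_mem_sh p σ' _ γ' hσp hτq hmem
  obtain ⟨x, y, u, a, b, c, hab, hbc, hu, hγ, hγ'⟩ := hstep
  subst hγ; subst hγ'
  by_cases hck : c ≤ k
  · have hbk : b ≤ k := by omega
    have hak : a ≤ k := by omega
    have hufp : u.filter p = u := List.filter_eq_self.2 fun z hz => by
      have := hu z hz; simp [hp]; omega
    have hufq : u.filter (fun z => !p z) = [] := List.filter_eq_nil_iff.2 fun z hz => by
      have := hu z hz; simp [hp]; omega
    refine ⟨x.filter p ++ b :: u ++ c :: a :: y.filter p, τ',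
      Or.inr ⟨x.filter p, y.filter p, u, a, b, c, hab, hbc, hu, rfl, ?_⟩, Or.inl rfl, ?_⟩
    · rw [← h1]
      simp [hp, List.filter_append, List.filter_cons, hak, hbk, hck, hufp]; exact fun z hz => ((hu z hz).trans_le hbk).le
    · apply mem_sh_of_filter p
      · simp [hp, List.filter_append, List.filter_cons, hak, hbk, hck, hufp]; exact fun z hz => ((hu z hz).trans_le hbk).le
      · rw [← h2]
        simp [hp, List.filter_append, List.filter_cons, hak, hbk, hck, hufq]
  · by_cases hak : k < a
    · have hbk : k < b := by omega
      have hck' : k < c := by omega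
      set q : ℕ → Bool := fun z => !p z with hq
      have hτeq : τ'.map (· + k) =
          x.filter q ++ b :: u.filter q ++ a :: c :: y.filter q := by
        rw [← h2]
        simp [hq, hp, List.filter_append, List.filter_cons, hak, hbk, hck']
      set m : List ℕ := x.filter q ++ b :: u.filter q ++ c :: a :: y.filter q with hm
      have hstep2 : BellStep m (τ'.map (· + k)) :=
        ⟨x.filter q, y.filter q, u.filter q, a, b, c, hab, hbc,
          fun z hz => hu z (List.mem_of_mem_filter hz), rfl, hτeq⟩
      have hτbig : ∀ z ∈ τ'.map (· + k), k < z := by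
        intro z hz
        obtain ⟨t, ht, rfl⟩ := List.mem_map.1 hz
        have := hτm t ht; omega
      have hmbig : ∀ z ∈ m, k < z := fun z hz =>
        hτbig z ((bellStep_perm hstep2).mem_iff.1 hz)
      have hstep3 := bellStep_map_sub hstep2 hmbig
      have hτsub : (τ'.map (· + k)).map (· - k) = τ' := by
        rw [List.map_map]
        conv_rhs => rw [← List.map_id τ']
        exact List.map_congr_left fun z hz => by simp
      rw [hτsub] at hstep3
      have hmeq : (m.map (· - k)).map (· + k) = m := by
        rw [List.map_map]
        conv_rhs => rw [← List.map_id m]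
        exact List.map_congr_left fun z hz => by
          have := hmbig z hz; simp; omega
      refine ⟨σ', m.map (· - k), Or.inl rfl, Or.inr hstep3, ?_⟩
      apply mem_sh_of_filter p
      · rw [← h1]
        simp [hp, List.filter_append, List.filter_cons, hak, hbk, hck']
      · rw [hmeq]
        simp only [hm, hq]
        simp [hp, List.filter_append, List.filter_cons, hak, hbk, hck']
    · push_neg at hak
      refine ⟨σ', τ', Or.inl rfl, Or.inl rfl, ?_⟩
      apply mem_sh_of_filter p
      · rw [← h1]
        by_cases hbk : b ≤ k <;>
          simp [hp, List.filter_append, List.filter_cons, hak, hck, hbk]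
      · rw [← h2]
        by_cases hbk : b ≤ k <;>
          simp [hp, List.filter_append, List.filter_cons, hak, hck, hbk]

/-- For `σ ∈ S_k` and `τ ∈ S_ℓ`, the union over the Bell classes of `σ` and `τ` of the
shifted shuffles `σ' ⧢ τ'[k]` is a union of Bell congruence classes of `S_{k+ℓ}`,
i.e. it is closed under the Bell congruence. -/
theorem shifted_shuffle_of_bell_classes_is_union_of_classes
    (k l : ℕ) (σ τ : List ℕ)
    (hσ : σ.Perm ((List.range k).map (· + 1)))
    (hτ : τ.Perm ((List.range l).map (· + 1)))
    (γ γ' : List ℕ)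
    (hγ : ∃ σ' τ' : List ℕ, BellCongr σ σ' ∧ BellCongr τ τ' ∧
      γ ∈ sh σ' (τ'.map (· + k)))
    (hcong : BellCongr γ γ') :
    ∃ σ' τ' : List ℕ, BellCongr σ σ' ∧ BellCongr τ τ' ∧
      γ' ∈ sh σ' (τ'.map (· + k)) := by
  have hbσ : ∀ {s : List ℕ}, BellCongr σ s → ∀ x ∈ s, x ≤ k := by
    intro s hs x hx
    have hxσ : x ∈ σ := ((bellCongr_perm hs).mem_iff).2 hx
    have := hσ.mem_iff.1 hxσ
    obtain ⟨i, hi, rfl⟩ := List.mem_map.1 this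
    have := List.mem_range.1 hi
    omega
  have hbτ : ∀ {s : List ℕ}, BellCongr τ s → ∀ x ∈ s, 1 ≤ x := by
    intro s hs x hx
    have hxτ : x ∈ τ := ((bellCongr_perm hs).mem_iff).2 hx
    have := hτ.mem_iff.1 hxτ
    obtain ⟨i, hi, rfl⟩ := List.mem_map.1 this
    omega
  suffices H : ∀ w w', BellCongr w w' →
      ((∃ σ' τ' : List ℕ, BellCongr σ σ' ∧ BellCongr τ τ' ∧ w ∈ sh σ' (τ'.map (· + k))) ↔
       (∃ σ' τ' : List ℕ, BellCongr σ σ' ∧ BellCongr τ τ' ∧ w' ∈ sh σ' (τ'.map (· + k)))) by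
    exact (H γ γ' hcong).1 hγ
  intro w w' h
  induction h with
  | rel w₁ w₂ hstep =>
    constructor
    · rintro ⟨σ', τ', hcσ, hcτ, hmem⟩
      obtain ⟨σ'', τ'', hs, ht, hmem'⟩ := key k (hbσ hcσ) (hbτ hcτ) hstep hmem
      refine ⟨σ'', τ'', ?_, ?_, hmem'⟩
      · rcases hs with rfl | hs
        · exact hcσ
        · exact Relation.EqvGen.trans _ _ _ hcσ (Relation.EqvGen.rel _ _ hs)
      · rcases ht with rfl | ht
        · exact hcτ
        · exact Relation.EqvGen.trans _ _ _ hcτ (Relation.EqvGen.rel _ _ ht)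
    · rintro ⟨σ', τ', hcσ, hcτ, hmem⟩
      obtain ⟨σ'', τ'', hs, ht, hmem'⟩ := key' k (hbσ hcσ) (hbτ hcτ) hstep hmem
      refine ⟨σ'', τ'', ?_, ?_, hmem'⟩
      · rcases hs with rfl | hs
        · exact hcσ
        · exact Relation.EqvGen.trans _ _ _ hcσ
            (Relation.EqvGen.symm _ _ (Relation.EqvGen.rel _ _ hs))
      · rcases ht with rfl | ht
        · exact hcτ
        · exact Relation.EqvGen.trans _ _ _ hcτ
            (Relation.EqvGen.symm _ _ (Relation.EqvGen.rel _ _ ht))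
  | refl _ => exact Iff.rfl
  | symm _ _ _ ih => exact ih.symm
  | trans _ _ _ _ _ ih1 ih2 => exact ih1.trans ih2
end
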